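/- Let 𝔾 be a countable discrete torsional abelian group (every finite subset lies in a finite subgroup), let γ: 𝔾 → ℝ₊ tend to zero at infinity (along the filter of complements of finite sets), and let l_γ be the normed space of functions f: 𝔾 → ℂ_p with ‖f‖_γ = sup_i |f(i)|_p γ(i) < ∞. Then every bounded function f: 𝔾 → ℂ_p can be approximated arbitrarily well in the norm ‖·‖_γ by trigonometric polynomials, i.e., functions of the form i ↦ Σ_{ν=1}^N c_ν χ_ν(i) where χ_ν are ℂ_p-valued characters of 𝔾 and c_ν ∈ ℂ_p. -/

import Mathlib

section Aux
variable {C : Type*} [NontriviallyNormedField C] [IsUltrametricDist C]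

omit [IsUltrametricDist C] in
lemma aux_norm_one_of_pow_eq_one {x : C} {m : ℕ} (hm : m ≠ 0) (hx : x ^ m = 1) : ‖x‖ = 1 := by
  have h : ‖x‖ ^ m = 1 := by rw [← norm_pow, hx, norm_one]
  rcases lt_trichotomy ‖x‖ 1 with h1 | h1 | h1
  · exact absurd h (by have := pow_lt_one₀ (norm_nonneg x) h1 hm; linarith)
  · exact h1
  · exact absurd h (by have := one_lt_pow₀ h1 hm; linarith)

lemma aux_norm_natCast_eq_one {p : ℕ} (hp : p.Prime) (hres : ‖(p : C)‖ < 1)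
    {n : ℕ} (hn : ¬ p ∣ n) : ‖(n : C)‖ = 1 := by
  have hco : Nat.Coprime p n := (Nat.Prime.coprime_iff_not_dvd hp).mpr hn
  obtain ⟨a, b, hab⟩ := (Nat.isCoprime_iff_coprime.mpr hco)
  have hcast : (a : C) * (p : C) + (b : C) * (n : C) = 1 := by
    have := congrArg (fun z : ℤ => (z : C)) hab
    push_cast at this
    simpa using this
  refine le_antisymm (IsUltrametricDist.norm_natCast_le_one C n) ?_
  by_contra hlt
  push_neg at hlt
  have h1 : (1 : ℝ) = ‖(a : C) * (p : C) + (b : C) * (n : C)‖ := by rw [hcast, norm_one]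
  have h2 : ‖(a : C) * (p : C) + (b : C) * (n : C)‖ ≤
      max (‖(a : C)‖ * ‖(p : C)‖) (‖(b : C)‖ * ‖(n : C)‖) := by
    simpa [norm_mul] using IsUltrametricDist.norm_add_le_max ((a : C) * p) ((b : C) * n)
  have ha : ‖(a : C)‖ ≤ 1 := IsUltrametricDist.norm_intCast_le_one C a
  have hb : ‖(b : C)‖ ≤ 1 := IsUltrametricDist.norm_intCast_le_one C b
  have hpn : ‖(p : C)‖ ≥ 0 := norm_nonneg _
  have : max (‖(a : C)‖ * ‖(p : C)‖) (‖(b : C)‖ * ‖(n : C)‖) < 1 := by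
    apply max_lt
    · calc ‖(a : C)‖ * ‖(p : C)‖ ≤ 1 * ‖(p : C)‖ := by
            exact mul_le_mul_of_nonneg_right ha hpn
        _ < 1 := by simpa using hres
    · calc ‖(b : C)‖ * ‖(n : C)‖ ≤ 1 * ‖(n : C)‖ :=
            mul_le_mul_of_nonneg_right hb (norm_nonneg _)
        _ < 1 := by simpa using hlt

  linarith [h1 ▸ h2]

end Aux
section Ext
variable {C : Type*} [NontriviallyNormedField C] [IsUltrametricDist C] [IsAlgClosed C]

noncomputable instance auxDivisible : DivisibleBy (Additive Cˣ) ℤ := by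
  have hs : ∀ {n : ℕ}, n ≠ 0 → Function.Surjective fun x : Cˣ => x ^ n := by
    intro n hn u
    obtain ⟨z, hz⟩ := IsAlgClosed.exists_pow_nat_eq (u : C) (Nat.pos_of_ne_zero hn)
    have hz0 : z ≠ 0 := by
      intro h
      apply u.ne_zero
      rw [← hz, h, zero_pow hn]
    exact ⟨Units.mk0 z hz0, by ext; simpa using hz⟩
  have : RootableBy Cˣ ℕ := rootableByOfPowLeftSurj _ _ hs
  have : RootableBy Cˣ ℤ := Group.rootableByIntOfRootableByNat _
  exact {
    div := fun a n => Additive.ofMul (RootableBy.root a.toMul n)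
    div_zero := fun a => congrArg Additive.ofMul (RootableBy.root_zero _)
    div_cancel := fun {n} a hn => by
      have := RootableBy.root_cancel (α := ℤ) a.toMul hn
      calc n • Additive.ofMul (RootableBy.root a.toMul n)
          = Additive.ofMul ((RootableBy.root a.toMul n) ^ n) := (ofMul_zpow _ _).symm
        _ = a := by rw [this]; rfl }

lemma aux_extend_char {𝔾 : Type*} [CommGroup 𝔾] (H : Subgroup 𝔾) (φ : H →* Cˣ) :
    ∃ χ : 𝔾 →* Cˣ, ∀ x : H, χ (x : 𝔾) = φ x := by
  have hbaer : Module.Baer ℤ (Additive Cˣ) := Module.Baer.of_divisible _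
  have hinj : Function.Injective (MonoidHom.toAdditive (H.subtype)) := fun a b h => by
    have := Subtype.ext (α := 𝔾) (congrArg Additive.toMul h)
    exact this
  obtain ⟨h, hh⟩ := hbaer.extension_property_addMonoidHom
    (MonoidHom.toAdditive (H.subtype)) hinj (MonoidHom.toAdditive φ)
  refine ⟨MonoidHom.toAdditive.symm h, fun x => ?_⟩
  have := DFunLike.congr_fun hh (Additive.ofMul x)
  exact congrArg Additive.toMul this

end Ext

section Fourier
variable {K : Type*} [Field K] {G : Type*} [CommGroup G] [Fintype G]

lemma aux_sum_char_eq_zero (φ : G →* Kˣ) (hφ : φ ≠ 1) : ∑ a : G, ((φ a : Kˣ) : K) = 0 := by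
  obtain ⟨b, hb⟩ : ∃ b, φ b ≠ 1 := by
    by_contra h
    push_neg at h
    exact hφ (MonoidHom.ext fun a => by simpa using h a)
  have hb' : ((φ b : Kˣ) : K) ≠ 1 := fun h => hb (Units.ext (by simpa using h))
  refine eq_zero_of_mul_eq_self_left hb' ?_
  rw [Finset.mul_sum]
  have : ∀ a : G, ((φ b : Kˣ) : K) * ((φ a : Kˣ) : K) = ((φ (b * a) : Kˣ) : K) := by
    intro a; rw [map_mul]; rfl
  simp_rw [this]
  exact Fintype.sum_bijective _ (Group.mulLeft_bijective b) _ _ fun a => rfl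

variable [HasEnoughRootsOfUnity K (Monoid.exponent G)] [Fintype (G →* Kˣ)]

open scoped Classical in
lemma aux_sum_over_chars (a : G) :
    ∑ φ : G →* Kˣ, ((φ a : Kˣ) : K)
      = if a = 1 then (Fintype.card (G →* Kˣ) : K) else 0 := by
  split_ifs with ha
  · simp [ha]
  · let E : (G →* Kˣ) →* Kˣ :=
      { toFun := fun φ => φ a
        map_one' := rfl
        map_mul' := fun φ ψ => rfl }
    have hE : E ≠ 1 := by
      obtain ⟨φ, hφ⟩ := CommGroup.exists_apply_ne_one_of_hasEnoughRootsOfUnity G K ha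
      intro h
      exact hφ (by simpa [E] using DFunLike.congr_fun h φ)
    exact aux_sum_char_eq_zero E hE

lemma aux_fourier (hcard : (Fintype.card (G →* Kˣ) : K) = (Fintype.card G : K))
    (hn : (Fintype.card G : K) ≠ 0) (f : G → K) (b : G) :
    ∑ φ : G →* Kˣ,
      ((Fintype.card G : K)⁻¹ * ∑ a : G, f a * (((φ a)⁻¹ : Kˣ) : K)) * ((φ b : Kˣ) : K)
      = f b := by
  classical
  have key : ∀ (φ : G →* Kˣ) (a : G),
      (f a * (((φ a)⁻¹ : Kˣ) : K)) * ((φ b : Kˣ) : K) = f a * ((φ (a⁻¹ * b) : Kˣ) : K) := by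
    intro φ a
    rw [map_mul, map_inv]
    push_cast
    ring
  calc ∑ φ : G →* Kˣ,
      ((Fintype.card G : K)⁻¹ * ∑ a : G, f a * (((φ a)⁻¹ : Kˣ) : K)) * ((φ b : Kˣ) : K)
      = (Fintype.card G : K)⁻¹ *
          ∑ φ : G →* Kˣ, ∑ a : G, f a * ((φ (a⁻¹ * b) : Kˣ) : K) := by
        rw [Finset.mul_sum]
        refine Finset.sum_congr rfl fun φ _ => ?_
        rw [mul_assoc, Finset.sum_mul]
        congr 1
        exact Finset.sum_congr rfl fun a _ => key φ a
    _ = (Fintype.card G : K)⁻¹ *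
          ∑ a : G, f a * ∑ φ : G →* Kˣ, ((φ (a⁻¹ * b) : Kˣ) : K) := by
        rw [Finset.sum_comm]
        congr 1
        exact Finset.sum_congr rfl fun a _ => (Finset.mul_sum _ _ _).symm
    _ = f b := by
        have : ∀ a : G, f a * ∑ φ : G →* Kˣ, ((φ (a⁻¹ * b) : Kˣ) : K)
            = if a = b then f b * (Fintype.card G : K) else 0 := by
          intro a
          rw [aux_sum_over_chars (a⁻¹ * b)]
          rcases eq_or_ne a b with rfl | hab
          · simp [hcard]
          · have : ¬ (a⁻¹ * b = 1) := by
              simpa [inv_mul_eq_one] using hab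
            simp [this, hab]
        simp_rw [this]
        rw [Finset.sum_ite_eq' Finset.univ b (fun _ => f b * (Fintype.card G : K))]
        simp only [Finset.mem_univ, if_true]
        field_simp

end Fourier

lemma aux_char_norm_one {C : Type*} [NontriviallyNormedField C]
    {𝔾 : Type*} [CommGroup 𝔾]
    (tors : ∀ s : Finset 𝔾, ∃ H : Subgroup 𝔾, (H : Set 𝔾).Finite ∧ ↑s ⊆ (H : Set 𝔾))
    (χ : 𝔾 →* Cˣ) (i : 𝔾) : ‖((χ i : Cˣ) : C)‖ = 1 := by
  classical
  obtain ⟨K, hKfin, hKsub⟩ := tors {i}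
  have hiK : i ∈ K := hKsub (by simp)
  have : Finite K := hKfin.to_subtype
  set m := Nat.card K with hm
  have hm0 : m ≠ 0 := Nat.card_pos.ne'
  have him : i ^ m = 1 := by
    have h1 : (⟨i, hiK⟩ : K) ^ m = 1 := pow_card_eq_one'
    have := congrArg (Subtype.val : K → 𝔾) h1
    simpa using this
  have hχ : ((χ i : Cˣ) : C) ^ m = 1 := by
    have : (χ i) ^ m = 1 := by rw [← map_pow, him, map_one]
    calc ((χ i : Cˣ) : C) ^ m = (((χ i) ^ m : Cˣ) : C) := by
          rw [Units.val_pow_eq_pow_val]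
      _ = 1 := by rw [this]; rfl
  exact aux_norm_one_of_pow_eq_one hm0 hχ


/-- Let `𝔾` be a countable discrete torsional abelian group (every finite
subset lies in a finite subgroup) which is the dual of a `p`-compatible group (all its
finite subgroups have order prime to `p`).  Let `γ : 𝔾 → ℝ₊` tend to zero at infinity.
Then every bounded function `f : 𝔾 → ℂ_p` can be approximated arbitrarily well in the
norm `‖f‖_γ = sup_i |f i| γ i` by trigonometric polynomials, i.e. finite linear
combinations of (norm-one-valued) characters of `𝔾`.
(Here the field `C`, complete, algebraically closed, non-Archimedean, with residue
characteristic `p`, plays the role of `ℂ_p`, which is not available in Mathlib.) -/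
theorem stmt_9 (p : ℕ) [Fact p.Prime]
    (C : Type*) [NontriviallyNormedField C] [IsUltrametricDist C] [CompleteSpace C]
    [IsAlgClosed C] (hres : ‖(p : C)‖ < 1)
    (𝔾 : Type*) [CommGroup 𝔾] [Countable 𝔾]
    (tors : ∀ s : Finset 𝔾, ∃ H : Subgroup 𝔾, (H : Set 𝔾).Finite ∧ ↑s ⊆ (H : Set 𝔾))
    (hp : ∀ H : Subgroup 𝔾, (H : Set 𝔾).Finite → ¬ (p ∣ Nat.card H))
    (γ : 𝔾 → ℝ) (hγ0 : ∀ i, 0 ≤ γ i)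
    (hγ : Filter.Tendsto γ Filter.cofinite (nhds 0))
    (f : 𝔾 → C) (hf : ∃ Mf : ℝ, ∀ i, ‖f i‖ ≤ Mf) :
    ∀ ε > (0 : ℝ), ∃ (N : ℕ) (c : Fin N → C) (χ : Fin N → 𝔾 →* Cˣ),
      (∀ ν i, ‖((χ ν i : Cˣ) : C)‖ = 1) ∧
      ∀ i : 𝔾, ‖f i - ∑ ν : Fin N, c ν * ((χ ν i : Cˣ) : C)‖ * γ i < ε := by
  classical
  intro ε hε
  obtain ⟨Mf, hMf⟩ := hf
  set M : ℝ := max Mf 1 with hM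
  have hM1 : (1 : ℝ) ≤ M := le_max_right _ _
  have hMpos : (0 : ℝ) < M := lt_of_lt_of_le one_pos hM1
  set δ : ℝ := ε / M with hδ
  have hδpos : 0 < δ := div_pos hε hMpos
  -- the finite "bad" set
  have hfin : {i : 𝔾 | ¬ dist (γ i) 0 < δ}.Finite := by
    have := Metric.tendsto_nhds.mp hγ δ hδpos
    exact Filter.eventually_cofinite.mp this
  obtain ⟨H, hHfin, hHsub⟩ := tors hfin.toFinset
  have : Finite H := hHfin.to_subtype
  have : Fintype H := Fintype.ofFinite _
  have hpH : ¬ p ∣ Nat.card H := hp H hHfin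
  have hcardnorm : ‖((Fintype.card H : ℕ) : C)‖ = 1 := by
    rw [Nat.card_eq_fintype_card] at hpH
    exact aux_norm_natCast_eq_one (Fact.out) hres hpH
  have hn : ((Fintype.card H : ℕ) : C) ≠ 0 := by
    intro h; rw [h, norm_zero] at hcardnorm; exact one_ne_zero hcardnorm.symm
  -- roots of unity
  have hexp : ¬ p ∣ Monoid.exponent H := fun h =>
    hpH (h.trans (Group.exponent_dvd_nat_card))
  have : NeZero ((Monoid.exponent H : ℕ) : C) := by
    refine ⟨fun h => ?_⟩
    have := aux_norm_natCast_eq_one (C := C) (Fact.out) hres hexp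
    rw [h, norm_zero] at this
    exact one_ne_zero this.symm
  have hdual := CommGroup.monoidHom_mulEquiv_of_hasEnoughRootsOfUnity H C
  let e : (H →* Cˣ) ≃* H := hdual.some
  have : Fintype (H →* Cˣ) := Fintype.ofEquiv H e.toEquiv.symm
  have hcard : ((Fintype.card (H →* Cˣ) : ℕ) : C) = ((Fintype.card H : ℕ) : C) := by
    rw [Fintype.card_congr e.toEquiv]
  -- characters of H have values of norm one
  have hψnorm : ∀ (ψ : H →* Cˣ) (a : H), ‖((ψ a : Cˣ) : C)‖ = 1 := by
    intro ψ a
    have h1 : (ψ a) ^ (Fintype.card H) = 1 := by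
      rw [← map_pow, pow_card_eq_one, map_one]
    have h2 : ((ψ a : Cˣ) : C) ^ (Fintype.card H) = 1 := by
      calc ((ψ a : Cˣ) : C) ^ (Fintype.card H)
          = (((ψ a) ^ (Fintype.card H) : Cˣ) : C) := by rw [Units.val_pow_eq_pow_val]
        _ = 1 := by rw [h1]; rfl
    exact aux_norm_one_of_pow_eq_one Fintype.card_ne_zero h2
  -- Fourier coefficients
  set coef : (H →* Cˣ) → C :=
    fun ψ => ((Fintype.card H : ℕ) : C)⁻¹ * ∑ a : H, f a * (((ψ a)⁻¹ : Cˣ) : C) with hcoef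
  have hcoefbound : ∀ ψ : H →* Cˣ, ‖coef ψ‖ ≤ M := by
    intro ψ
    rw [hcoef]
    rw [norm_mul, norm_inv, hcardnorm, inv_one, one_mul]
    refine IsUltrametricDist.norm_sum_le_of_forall_le_of_nonneg (le_of_lt hMpos) ?_
    intro a _
    have h1 : ‖(((ψ a)⁻¹ : Cˣ) : C)‖ = 1 := by
      rw [Units.val_inv_eq_inv_val, norm_inv, hψnorm, inv_one]
    rw [norm_mul, h1, mul_one]
    exact le_trans (hMf a) (le_max_left _ _)
  -- inversion formula
  have hinv : ∀ b : H, ∑ ψ : H →* Cˣ, coef ψ * ((ψ b : Cˣ) : C) = f b :=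
    aux_fourier hcard hn (fun a : H => f a)
  -- extend each character
  have hext : ∀ ψ : H →* Cˣ, ∃ χ : 𝔾 →* Cˣ, ∀ x : H, χ (x : 𝔾) = ψ x :=
    fun ψ => aux_extend_char H ψ
  choose ext hext' using hext
  -- the data
  set N : ℕ := Fintype.card (H →* Cˣ) with hN
  let en : Fin N ≃ (H →* Cˣ) := (Fintype.equivFin _).symm
  refine ⟨N, fun ν => coef (en ν), fun ν => ext (en ν),
    fun ν i => aux_char_norm_one tors _ i, ?_⟩
  intro i
  by_cases hiH : i ∈ H
  · -- on H the polynomial equals f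
    have hsum : ∑ ν : Fin N, coef (en ν) * ((ext (en ν) i : Cˣ) : C) = f i := by
      refine (Fintype.sum_equiv en _ (fun ψ => coef ψ * ((ψ ⟨i, hiH⟩ : Cˣ) : C))
        fun ν => ?_).trans (hinv ⟨i, hiH⟩)
      rw [show ext (en ν) i = (en ν) ⟨i, hiH⟩ from hext' (en ν) ⟨i, hiH⟩]
    rw [hsum, sub_self, norm_zero, zero_mul]
    exact hε
  · -- outside H: γ is small
    have his : i ∉ hfin.toFinset := fun h => hiH (hHsub h)
    have hγi : γ i < δ := by
      have := hfin.mem_toFinset.not.mp his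
      rw [Set.mem_setOf_eq] at this
      push_neg at this
      rwa [Real.dist_eq, sub_zero, abs_of_nonneg (hγ0 i)] at this
    have hnorm : ‖f i - ∑ ν : Fin N, coef (en ν) * ((ext (en ν) i : Cˣ) : C)‖ ≤ M := by
      have hP : ‖∑ ν : Fin N, coef (en ν) * ((ext (en ν) i : Cˣ) : C)‖ ≤ M := by
        refine IsUltrametricDist.norm_sum_le_of_forall_le_of_nonneg (le_of_lt hMpos) ?_
        intro ν _
        rw [norm_mul, aux_char_norm_one tors _ i, mul_one]
        exact hcoefbound _
      have hfi : ‖f i‖ ≤ M := le_trans (hMf i) (le_max_left _ _)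
      calc ‖f i - ∑ ν : Fin N, coef (en ν) * ((ext (en ν) i : Cˣ) : C)‖
          ≤ max ‖f i‖ ‖∑ ν : Fin N, coef (en ν) * ((ext (en ν) i : Cˣ) : C)‖ := by
            simpa [sub_eq_add_neg] using
              IsUltrametricDist.norm_add_le_max (f i)
                (-(∑ ν : Fin N, coef (en ν) * ((ext (en ν) i : Cˣ) : C)))
        _ ≤ M := max_le hfi hP
    calc ‖f i - ∑ ν : Fin N, coef (en ν) * ((ext (en ν) i : Cˣ) : C)‖ * γ i
        ≤ M * γ i := mul_le_mul_of_nonneg_right hnorm (hγ0 i)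
      _ < M * δ := by exact mul_lt_mul_of_pos_left hγi hMpos
      _ = ε := by rw [hδ]; field_simp
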